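/- Suppose φ : S → ℝ is smooth on a compact Riemannian surface S and satisfies Δφ = 4 e^{V+φ} f(e^{V+φ}) - C₀ where V is smooth away from finitely many singularities and 0 ≤ s f(s) ≤ 1 for all s > 0. If the equation has a solution, then integrating gives 0 < C₀ < 4, i.e. 0 < 2 - (4π/|S|)(M - N) < 4, equivalently |M - N| < |S|/(2π). -/

import Mathlib

open MeasureTheory

/-- Necessity of the bound `|M - N| < |S|/(2π)`: if `φ` solves
`Δφ = 4 e^{V+φ} f(e^{V+φ}) - C₀` on a compact surface `S` (so that the integral
of `Δφ` vanishes), with `0 < s f s < 1` for `s > 0` and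
`C₀ = 2 - (4π/|S|)(M - N)`, then `0 < C₀ < 4`, i.e. `|M - N| < |S|/(2π)`. -/
theorem stmt8 {S : Type*} [MeasurableSpace S] (μ : Measure S) [IsFiniteMeasure μ]
    (hpos : 0 < (μ Set.univ).toReal)
    (f : ℝ → ℝ) (hf : ∀ s : ℝ, 0 < s → 0 < s * f s ∧ s * f s < 1)
    (M N : ℕ) (C₀ : ℝ)
    (hC : C₀ = 2 - (4 * Real.pi / (μ Set.univ).toReal) * ((M : ℝ) - (N : ℝ)))
    (V φ Lap : S → ℝ)
    (hEq : ∀ x : S,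
      Lap x = 4 * Real.exp (V x + φ x) * f (Real.exp (V x + φ x)) - C₀)
    (hInt : Integrable Lap μ)
    (hIntRHS : Integrable
      (fun x => Real.exp (V x + φ x) * f (Real.exp (V x + φ x))) μ)
    (hZero : ∫ x, Lap x ∂μ = 0) :
    0 < C₀ ∧ C₀ < 4 ∧
      |(M : ℝ) - (N : ℝ)| < (μ Set.univ).toReal / (2 * Real.pi) := by
  set A := (μ Set.univ).toReal with hA
  set g : S → ℝ := fun x => Real.exp (V x + φ x) * f (Real.exp (V x + φ x)) with hg
  have hg01 : ∀ x, 0 < g x ∧ g x < 1 := fun x => hf _ (Real.exp_pos _)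
  have hμne : μ Set.univ ≠ 0 := by
    intro h
    have : A = 0 := by rw [hA, h]; simp
    linarith
  have hI0 : 0 < ∫ x, g x ∂μ := by
    rw [integral_pos_iff_support_of_nonneg (fun x => (hg01 x).1.le) hIntRHS]
    have : Function.support g = Set.univ :=
      Set.eq_univ_of_forall fun x => (hg01 x).1.ne'
    rw [this]
    exact lt_of_le_of_ne zero_le (Ne.symm hμne)
  have hIA : ∫ x, g x ∂μ < A := by
    have h1 : Integrable (fun _ : S => (1 : ℝ)) μ := integrable_const 1
    have hpos' : 0 < ∫ x, ((1 : ℝ) - g x) ∂μ := by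
      rw [integral_pos_iff_support_of_nonneg
        (fun x => sub_nonneg.2 (hg01 x).2.le) (h1.sub hIntRHS)]
      have : (Function.support fun x => (1 : ℝ) - g x) = Set.univ :=
        Set.eq_univ_of_forall fun x => sub_ne_zero.2 (hg01 x).2.ne'
      rw [this]
      exact lt_of_le_of_ne zero_le (Ne.symm hμne)
    rw [integral_sub h1 hIntRHS, integral_const, smul_eq_mul, mul_one, measureReal_def, ← hA] at hpos'
    linarith
  have hLap : Lap = fun x => 4 * g x - C₀ := by
    funext x; rw [hEq x, hg]; ring
  have hint : ∫ x, Lap x ∂μ = 4 * (∫ x, g x ∂μ) - C₀ * A := by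
    rw [hLap, integral_sub (hIntRHS.const_mul 4) (integrable_const C₀),
      integral_const_mul, integral_const, smul_eq_mul, measureReal_def, ← hA]
    ring
  have hC0 : C₀ * A = 4 * ∫ x, g x ∂μ := by
    rw [hint] at hZero; linarith
  have hC0pos : 0 < C₀ := by nlinarith
  have hC0lt : C₀ < 4 := by nlinarith
  refine ⟨hC0pos, hC0lt, ?_⟩
  have hπ : 0 < Real.pi := Real.pi_pos
  set d : ℝ := (M : ℝ) - (N : ℝ) with hd
  have e1 : 4 * Real.pi / A * d = (4 * Real.pi * d) / A := by ring
  have h1' : 4 * Real.pi * d < 2 * A := by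
    have h1 : (4 * Real.pi * d) / A < 2 := by rw [hC, e1] at hC0pos; linarith
    have := (div_lt_iff₀ hpos).mp h1; linarith
  have h2' : -(4 * Real.pi * d) < 2 * A := by
    have h2 : (-(4 * Real.pi * d)) / A < 2 := by
      rw [hC, e1] at hC0lt; rw [neg_div]; linarith
    have := (div_lt_iff₀ hpos).mp h2; linarith
  rw [abs_lt]
  constructor
  · rw [neg_lt, lt_div_iff₀ (by positivity : (0:ℝ) < 2 * Real.pi)]
    nlinarith
  · rw [lt_div_iff₀ (by positivity : (0:ℝ) < 2 * Real.pi)]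
    nlinarith
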